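/- Let Σ = {s_1 < s_2 < … < s_l} be a finite set of positive integers with s_1 = 1 and s_i − s_{i−1} ≤ 2 for all 2 ≤ i ≤ l. Then Σ is a δ-set; moreover, there exists a tree of order 2l that admits a regular distance Σ-labeling of degree 2. -/

import Mathlib

/-- `f` is a proper distance `J`-labeling of `G`: `f` is a surjection onto `J`, any two
distinct vertices sharing a label `k` are at graph distance exactly `k`, and every nonzero
label of `J` is used by at least two vertices. -/
def IsProperSetLabeling {V : Type*} (G : SimpleGraph V) (J : Finset ℕ) (f : V → ℕ) : Prop :=
  (∀ v : V, f v ∈ J) ∧ (∀ j ∈ J, ∃ v : V, f v = j) ∧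
    (∀ u v : V, u ≠ v → f u = f v → G.dist u v = f u) ∧
    (∀ j ∈ J, j ≠ 0 → ∃ u v : V, u ≠ v ∧ f u = j ∧ f v = j)

/-- A finite set `S` of nonnegative integers is a δ-set if some finite connected simple
graph admits a proper distance `S`-labeling. -/
def IsDeltaSet (S : Finset ℕ) : Prop :=
  ∃ (V : Type) (_ : Fintype V) (G : SimpleGraph V),
    G.Connected ∧ ∃ f : V → ℕ, IsProperSetLabeling G S f

namespace DeltaAux

def par (s : ℕ → ℕ) (n : ℕ) : ℕ :=
  if n % 2 = 0 then n - 2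
  else if s (n / 2) - (n / 2) ≤ 1 ∨ n / 2 = 0 then 0
  else 2 * (Nat.findGreatest (fun k => s k - k + 1 = s (n / 2) - (n / 2)) (n / 2 - 1)) + 1

lemma par_lt (s : ℕ → ℕ) (n : ℕ) (hn : 0 < n) : par s n < n := by
  unfold par
  split
  · omega
  · split
    · omega
    · have h2 : Nat.findGreatest (fun k => s k - k + 1 = s (n/2) - (n/2)) (n/2 - 1) ≤ n/2 - 1 :=
        Nat.findGreatest_le _
      omega

lemma par_le (s : ℕ → ℕ) (n : ℕ) : par s n ≤ n := by
  rcases Nat.eq_zero_or_pos n with h | h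
  · subst h; simp [par]
  · exact (par_lt s n h).le

def depth (s : ℕ → ℕ) : ℕ → ℕ
  | 0 => 0
  | (n+1) => depth s (par s (n+1)) + 1
  termination_by n => n
  decreasing_by exact par_lt s (n+1) (Nat.succ_pos n)

lemma depth_eq (s : ℕ → ℕ) (n : ℕ) (hn : 0 < n) : depth s n = depth s (par s n) + 1 := by
  obtain ⟨m, rfl⟩ := Nat.exists_eq_succ_of_ne_zero hn.ne'
  rw [depth]

lemma par_even (s : ℕ → ℕ) (n : ℕ) (h : n % 2 = 0) : par s n % 2 = 0 := by
  unfold par; rw [if_pos h]; omega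

lemma par_odd (s : ℕ → ℕ) (n : ℕ) (h : n % 2 = 1) : par s n = 0 ∨ par s n % 2 = 1 := by
  unfold par; rw [if_neg (by omega)]
  split
  · exact Or.inl rfl
  · exact Or.inr (by omega)

lemma par_even_val (s : ℕ → ℕ) (j : ℕ) : par s (2 * j) = 2 * j - 2 := by
  unfold par; rw [if_pos (by omega)]

section Hyps

variable {s : ℕ → ℕ} (h0 : s 0 = 1) (hmono : ∀ j, s j < s (j+1)) (hgap : ∀ j, s (j+1) ≤ s j + 2)

include h0 hmono in
lemma s_ge (j : ℕ) : j + 1 ≤ s j := by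
  induction j with
  | zero => omega
  | succ n ih => have := hmono n; omega

include h0 hmono hgap in
/-- unit-step intermediate value: every value between `1` and `s j - j` is attained. -/
lemma attain (j d : ℕ) (h1 : 1 ≤ d) (h2 : d ≤ s j - j) : ∃ k ≤ j, s k - k = d := by
  induction j with
  | zero => exact ⟨0, le_refl 0, by omega⟩
  | succ n ih =>
    rcases le_or_gt d (s n - n) with h | h
    · obtain ⟨k, hk, hk'⟩ := ih h
      exact ⟨k, by omega, hk'⟩
    · refine ⟨n + 1, le_refl _, ?_⟩
      have := hmono n
      have := hgap n
      have := s_ge h0 hmono n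
      omega

include h0 hmono in
lemma depth_even (j : ℕ) : depth s (2 * j) = j := by
  induction j with
  | zero => simp [depth]
  | succ n ih =>
    rw [depth_eq s _ (by omega), par_even_val]
    have : 2 * (n + 1) - 2 = 2 * n := by omega
    rw [this, ih]

include h0 hmono hgap in
lemma depth_odd (j : ℕ) : depth s (2 * j + 1) = s j - j := by
  induction j using Nat.strong_induction_on with
  | _ j ih =>
    have hsj := s_ge h0 hmono j
    rw [depth_eq s _ (by omega)]
    have hdiv : (2 * j + 1) / 2 = j := by omega
    by_cases hc : s j - j ≤ 1 ∨ j = 0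
    · have h1 : s j - j = 1 := by
        rcases hc with hc | hc
        · omega
        · subst hc; omega
      rw [show par s (2 * j + 1) = 0 by unfold par; rw [if_neg (by omega), hdiv, if_pos hc]]
      simp [depth, h1]
    · push_neg at hc
      obtain ⟨hc1, hc0⟩ := hc
      rw [show par s (2 * j + 1)
          = 2 * (Nat.findGreatest (fun k => s k - k + 1 = s j - j) (j - 1)) + 1 by
        unfold par; rw [if_neg (by omega), hdiv, if_neg (by push_neg; exact ⟨hc1, hc0⟩)]]
      -- existence of a witness below the bound
      obtain ⟨m, rfl⟩ := Nat.exists_eq_succ_of_ne_zero hc0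
      simp only [Nat.succ_eq_add_one] at *
      obtain ⟨k, hk, hk'⟩ := attain h0 hmono hgap m (s (m+1) - (m+1) - 1) (by omega)
        (by have := hmono m; have := hgap m; have := s_ge h0 hmono m; omega)
      have hP : (fun k => s k - k + 1 = s (m+1) - (m+1)) k := by
        show s k - k + 1 = s (m+1) - (m+1); omega
      have hspec := Nat.findGreatest_spec (P := fun k => s k - k + 1 = s (m+1) - (m+1))
        (m := k) (n := (m+1) - 1) (by omega) hP
      set K := Nat.findGreatest (fun k => s k - k + 1 = s (m+1) - (m+1)) ((m+1) - 1) with hK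
      have hKle : K ≤ (m+1) - 1 := Nat.findGreatest_le _
      have := ih K (by omega)
      have hspec' : s K - K + 1 = s (m+1) - (m+1) := hspec
      omega

end Hyps

section Graph

variable {s : ℕ → ℕ} {l : ℕ}

def parV (s : ℕ → ℕ) (l : ℕ) (v : Fin (2 * l)) : Fin (2 * l) :=
  ⟨par s v.val, lt_of_le_of_lt (par_le s v.val) v.isLt⟩

def Gr (s : ℕ → ℕ) (l : ℕ) : SimpleGraph (Fin (2 * l)) :=
  SimpleGraph.fromRel (fun u v => parV s l u = v)

lemma gr_adj {u v : Fin (2 * l)} :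
    (Gr s l).Adj u v ↔ u ≠ v ∧ (parV s l u = v ∨ parV s l v = u) :=
  SimpleGraph.fromRel_adj _ u v

lemma adj_par {v : Fin (2 * l)} (hv : v.val ≠ 0) : (Gr s l).Adj v (parV s l v) := by
  rw [gr_adj]
  refine ⟨?_, Or.inl rfl⟩
  intro h
  have h2 : (parV s l v).val = v.val := by rw [← h]
  have := par_lt s v.val (by omega)
  simp only [parV] at h2
  omega

lemma reach_root (hl : 0 < l) (n : ℕ) (hn : n < 2 * l) :
    (Gr s l).Reachable ⟨n, hn⟩ ⟨0, by omega⟩ := by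
  induction n using Nat.strong_induction_on with
  | _ n ih =>
    rcases Nat.eq_zero_or_pos n with h | h
    · subst h; rfl
    · have hadj := adj_par (s := s) (l := l) (v := ⟨n, hn⟩) (by simpa using h.ne')
      have hlt : par s n < n := par_lt s n h
      exact hadj.reachable.trans (ih (par s n) hlt _)

lemma gr_connected (hl : 0 < l) : (Gr s l).Connected := by
  rw [SimpleGraph.connected_iff_exists_forall_reachable]
  exact ⟨⟨0, by omega⟩, fun v => (reach_root hl v.val v.isLt).symm⟩

/-- the potential function -/
def phi (s : ℕ → ℕ) (l : ℕ) (v : Fin (2 * l)) : ℤ :=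
  if v.val % 2 = 1 then (depth s v.val : ℤ) else -(depth s v.val : ℤ)

lemma phi_par (v : Fin (2 * l)) (hv : v.val ≠ 0) :
    |phi s l v - phi s l (parV s l v)| ≤ 1 := by
  have hd : depth s v.val = depth s (par s v.val) + 1 := depth_eq s v.val (by omega)
  rcases Nat.even_or_odd v.val with he | ho
  · have he' : v.val % 2 = 0 := Nat.even_iff.mp he
    have hpe : par s v.val % 2 = 0 := par_even s v.val he'
    unfold phi; rw [show ((parV s l v) : ℕ) = par s v.val from rfl]
    rw [if_neg (by omega), if_neg (by omega), hd]
    push_cast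
    rw [abs_le]
    constructor <;> linarith
  · have ho' : v.val % 2 = 1 := Nat.odd_iff.mp ho
    rcases par_odd s v.val ho' with hp | hp
    · unfold phi; rw [show ((parV s l v) : ℕ) = par s v.val from rfl]
      rw [if_pos ho', hp, if_neg (by norm_num), hd, hp]
      simp [depth]
    · unfold phi; rw [show ((parV s l v) : ℕ) = par s v.val from rfl]
      rw [if_pos ho', if_pos hp, hd]
      push_cast
      rw [abs_le]
      constructor <;> linarith

lemma parV_ne_zero_val {v : Fin (2 * l)} (h : parV s l v ≠ v) : v.val ≠ 0 := by
  intro h0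
  apply h; apply Fin.ext
  simp only [parV, h0]
  simp [par]

lemma phi_adj {u v : Fin (2 * l)} (h : (Gr s l).Adj u v) :
    |phi s l u - phi s l v| ≤ 1 := by
  rw [gr_adj] at h
  obtain ⟨hne, h | h⟩ := h
  · have hu0 : u.val ≠ 0 := parV_ne_zero_val (by rw [h]; exact hne.symm)
    calc |phi s l u - phi s l v| = |phi s l u - phi s l (parV s l u)| := by rw [h]
    _ ≤ 1 := phi_par u hu0
  · have hv0 : v.val ≠ 0 := parV_ne_zero_val (by rw [h]; exact hne)
    calc |phi s l u - phi s l v| = |phi s l v - phi s l (parV s l v)| := by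
          rw [h, abs_sub_comm]
    _ ≤ 1 := phi_par v hv0

lemma phi_walk {u v : Fin (2 * l)} (w : (Gr s l).Walk u v) :
    |phi s l u - phi s l v| ≤ (w.length : ℤ) := by
  induction w with
  | nil => simp
  | @cons a b c hadj p ih =>
    calc |phi s l a - phi s l c| ≤ |phi s l a - phi s l b| + |phi s l b - phi s l c| :=
          abs_sub_le _ _ _
    _ ≤ 1 + (p.length : ℤ) := add_le_add (phi_adj hadj) ih
    _ = ((SimpleGraph.Walk.cons hadj p).length : ℤ) := by
          rw [SimpleGraph.Walk.length_cons]; push_cast; ring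

lemma dist_ge_phi (hl : 0 < l) (u v : Fin (2 * l)) :
    |phi s l u - phi s l v| ≤ ((Gr s l).dist u v : ℤ) := by
  obtain ⟨w, hw⟩ := (gr_connected hl).exists_walk_length_eq_dist u v
  calc |phi s l u - phi s l v| ≤ (w.length : ℤ) := phi_walk w
  _ = _ := by rw [hw]

lemma dist_le_one_of_adj {u v : Fin (2 * l)} (h : (Gr s l).Adj u v) :
    (Gr s l).dist u v ≤ 1 := by
  have := SimpleGraph.dist_le (SimpleGraph.Walk.cons h SimpleGraph.Walk.nil)
  simpa using this

lemma dist_root_le (hl : 0 < l) (n : ℕ) (hn : n < 2 * l) :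
    (Gr s l).dist ⟨n, hn⟩ ⟨0, by omega⟩ ≤ depth s n := by
  induction n using Nat.strong_induction_on with
  | _ n ih =>
    rcases Nat.eq_zero_or_pos n with h | h
    · subst h; simp [SimpleGraph.dist_self, depth]
    · have hadj := adj_par (s := s) (l := l) (v := ⟨n, hn⟩) (by simpa using h.ne')
      have hlt : par s n < n := par_lt s n h
      calc (Gr s l).dist ⟨n, hn⟩ ⟨0, by omega⟩
          ≤ (Gr s l).dist ⟨n, hn⟩ (parV s l ⟨n, hn⟩)
            + (Gr s l).dist (parV s l ⟨n, hn⟩) ⟨0, by omega⟩ :=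
            (gr_connected hl).dist_triangle
      _ ≤ 1 + depth s (par s n) := add_le_add (dist_le_one_of_adj hadj) (ih (par s n) hlt _)
      _ = depth s n := by rw [depth_eq s n (by omega)]; ring


lemma dist_pair (h0 : s 0 = 1) (hmono : ∀ j, s j < s (j+1)) (hgap : ∀ j, s (j+1) ≤ s j + 2)
    (j : ℕ) (hj : j < l) (hu : 2 * j < 2 * l) (hv : 2 * j + 1 < 2 * l) :
    (Gr s l).dist ⟨2 * j, hu⟩ ⟨2 * j + 1, hv⟩ = s j := by
  have hl : 0 < l := by omega
  have hde : depth s (2 * j) = j := depth_even (s := s) h0 hmono j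
  have hdo : depth s (2 * j + 1) = s j - j := depth_odd h0 hmono hgap j
  have hsj : j + 1 ≤ s j := s_ge h0 hmono j
  have hlow := dist_ge_phi (s := s) hl ⟨2 * j, hu⟩ ⟨2 * j + 1, hv⟩
  have hphi1 : phi s l ⟨2 * j, hu⟩ = -(j : ℤ) := by
    simp only [phi]
    rw [if_neg (by omega)]
    simp [hde]
  have hphi2 : phi s l ⟨2 * j + 1, hv⟩ = ((s j : ℤ) - (j : ℤ)) := by
    simp only [phi]
    rw [if_pos (by omega)]
    rw [hdo]
    push_cast [Nat.cast_sub (by omega : j ≤ s j)]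
    ring
  rw [hphi1, hphi2] at hlow
  have hlow' : (s j : ℤ) ≤ ((Gr s l).dist ⟨2 * j, hu⟩ ⟨2 * j + 1, hv⟩ : ℤ) := by
    have : |(-(j : ℤ)) - ((s j : ℤ) - (j : ℤ))| = (s j : ℤ) := by
      rw [show (-(j : ℤ)) - ((s j : ℤ) - (j : ℤ)) = -(s j : ℤ) by ring, abs_neg,
        abs_of_nonneg (by positivity)]
    omega
  have hup : (Gr s l).dist ⟨2 * j, hu⟩ ⟨2 * j + 1, hv⟩ ≤ s j := by
    calc (Gr s l).dist ⟨2 * j, hu⟩ ⟨2 * j + 1, hv⟩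
        ≤ (Gr s l).dist ⟨2 * j, hu⟩ ⟨0, by omega⟩ + (Gr s l).dist ⟨0, by omega⟩ ⟨2 * j + 1, hv⟩ :=
          (gr_connected hl).dist_triangle
    _ ≤ depth s (2 * j) + depth s (2 * j + 1) := by
        refine add_le_add (dist_root_le hl _ _) ?_
        rw [SimpleGraph.dist_comm]
        exact dist_root_le hl _ _
    _ = s j := by rw [hde, hdo]; omega
  omega


open SimpleGraph in
lemma gr_acyclic : (Gr s l).IsAcyclic := by
  intro u c hc
  classical
  have hTne : c.support.toFinset.Nonempty := ⟨u, List.mem_toFinset.mpr c.start_mem_support⟩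
  set M := c.support.toFinset.max' hTne with hMdef
  have hM : M ∈ c.support := List.mem_toFinset.mp (c.support.toFinset.max'_mem hTne)
  have hmax : ∀ x ∈ c.support, x ≤ M := fun x hx =>
    c.support.toFinset.le_max' x (List.mem_toFinset.mpr hx)
  have hc' := hc.rotate hM
  set c' := c.rotate M hM with hc'def
  have hsupp : ∀ x ∈ c'.support, x ≤ M := by
    intro x hx
    rw [c'.support_eq_cons] at hx
    rcases List.mem_cons.mp hx with h | h
    · exact h ▸ le_refl M
    · have hperm := Walk.support_rotate c M hM
      have : x ∈ c.support.tail := hperm.mem_iff.mp h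
      exact hmax x (by rw [c.support_eq_cons]; exact List.mem_cons_of_mem _ this)
  have key : ∀ x : Fin (2 * l), (Gr s l).Adj M x → x ≤ M → x = parV s l M := by
    intro x hadj hle
    rw [gr_adj] at hadj
    obtain ⟨hne, h | h⟩ := hadj
    · exact h.symm
    · exfalso
      have hx0 : x.val ≠ 0 := by
        intro h0
        have hpx : (parV s l x).val = 0 := by simp [parV, h0, par]
        rw [h] at hpx
        apply hne
        apply Fin.ext
        have : x.val ≤ M.val := hle
        omega
      have hlt := par_lt s x.val (by omega)
      have : (parV s l x).val = M.val := by rw [h]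
      have : x.val ≤ M.val := hle
      simp only [parV] at *
      omega
  have hnotnil : ¬ c'.Nil := hc'.not_nil
  obtain ⟨v₁, h₁, q, hq⟩ := Walk.not_nil_iff.mp hnotnil
  have hv₁ : v₁ = parV s l M := by
    refine key v₁ h₁ (hsupp v₁ ?_)
    rw [hq, Walk.support_cons]
    exact List.mem_cons_of_mem _ q.start_mem_support
  have hqpath : q.IsPath := ((Walk.cons_isCycle_iff q h₁).mp (hq ▸ hc')).1
  have hqlen : 2 ≤ q.length := by
    have h3 := hc'.three_le_length
    rw [hq, Walk.length_cons] at h3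
    omega
  have hrpath : q.reverse.IsPath := hqpath.reverse
  have hrnotnil : ¬ q.reverse.Nil := by
    rw [Walk.nil_iff_length_eq, Walk.length_reverse]
    omega
  obtain ⟨u₂, h₂, q₂, hr⟩ := Walk.not_nil_iff.mp hrnotnil
  have hu₂mem : u₂ ∈ c'.support := by
    have hmem : u₂ ∈ q.reverse.support := by
      rw [hr, Walk.support_cons]
      exact List.mem_cons_of_mem _ q₂.start_mem_support
    rw [Walk.support_reverse, List.mem_reverse] at hmem
    rw [hq, Walk.support_cons]
    exact List.mem_cons_of_mem _ hmem
  have hu₂ : u₂ = parV s l M := key u₂ h₂ (hsupp u₂ hu₂mem)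
  have heq : u₂ = v₁ := hu₂.trans hv₁.symm
  subst heq
  have hq₂nil : q₂ = Walk.nil :=
    (Walk.isPath_iff_eq_nil (p := q₂)).mp ((Walk.cons_isPath_iff h₂ q₂).mp (hr ▸ hrpath)).1
  have hlen1 : q.reverse.length = 1 := by
    rw [hr, hq₂nil, Walk.length_cons, Walk.length_nil]
  rw [Walk.length_reverse] at hlen1
  omega

lemma dist_pair' (h0 : s 0 = 1) (hmono : ∀ j, s j < s (j+1)) (hgap : ∀ j, s (j+1) ≤ s j + 2)
    (j : ℕ) (hj : j < l) (a b : Fin (2 * l)) (ha : a.val = 2 * j) (hb : b.val = 2 * j + 1) :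
    (Gr s l).dist a b = s j := by
  rcases a with ⟨av, alt⟩
  rcases b with ⟨bv, blt⟩
  simp only at ha hb
  subst ha hb
  exact dist_pair h0 hmono hgap j hj alt blt

end Graph

end DeltaAux

theorem deltaSet_of_gaps_le_two (S : Finset ℕ) (hne : S.Nonempty)
    (hpos : ∀ s ∈ S, 0 < s) (hmin : S.min' hne = 1)
    (hgap : ∀ a ∈ S, a < S.max' hne → ∃ b ∈ S, a < b ∧ b ≤ a + 2) :
    IsDeltaSet S ∧
      ∃ G : SimpleGraph (Fin (2 * S.card)), G.IsTree ∧
        ∃ f : Fin (2 * S.card) → ℕ, IsProperSetLabeling G S f ∧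
          ∀ s ∈ S, s ≠ 0 →
            (Finset.univ.filter (fun v : Fin (2 * S.card) => f v = s)).card = 2 := by
  classical
  have hl : 0 < S.card := Finset.card_pos.mpr hne
  set l := S.card with hldef
  have hcard : S.card = l := rfl
  set e := S.orderEmbOfFin hcard with hedef
  set s : ℕ → ℕ := fun j => if h : j < l then e ⟨j, h⟩ else e ⟨l - 1, by omega⟩ + (j + 1 - l)
    with hsdef
  have hsval : ∀ (j) (h : j < l), s j = e ⟨j, h⟩ := fun j h => dif_pos h
  have hsbig : ∀ j, l ≤ j → s j = e ⟨l - 1, by omega⟩ + (j + 1 - l) := fun j h =>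
    dif_neg (by omega)
  have hmemS : ∀ i : Fin l, e i ∈ S := fun i => Finset.orderEmbOfFin_mem S hcard i
  have hrange : ∀ b ∈ S, ∃ i : Fin l, e i = b := by
    intro b hb
    have hb' : b ∈ Set.range e := by rw [hedef, Finset.range_orderEmbOfFin S hcard]; exact hb
    exact hb'
  have hestrict : StrictMono e := (S.orderEmbOfFin hcard).strictMono
  have hemax : ∀ i : Fin l, e i ≤ S.max' hne := fun i => S.le_max' _ (hmemS i)
  have h0 : s 0 = 1 := by
    rw [hsval 0 hl, hedef, Finset.orderEmbOfFin_zero hcard hl]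
    exact hmin
  have hmono : ∀ j, s j < s (j+1) := by
    intro j
    rcases lt_or_ge (j+1) l with h | h
    · rw [hsval j (by omega), hsval (j+1) h]
      exact hestrict (by simp [Fin.lt_def])
    · rcases lt_or_ge j l with h2 | h2
      · have hj : (⟨j, h2⟩ : Fin l) = ⟨l - 1, by omega⟩ := by
          apply Fin.ext; simp; omega
        rw [hsval j h2, hsbig (j+1) (by omega), hj]
        omega
      · rw [hsbig j h2, hsbig (j+1) (by omega)]
        omega
  have hgap2 : ∀ j, s (j+1) ≤ s j + 2 := by
    intro j
    rcases lt_or_ge (j+1) l with h | h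
    · have hamax : e ⟨j, by omega⟩ < S.max' hne :=
        lt_of_lt_of_le (hestrict (show (⟨j, by omega⟩ : Fin l) < ⟨j+1, h⟩ by
          simp [Fin.lt_def])) (hemax _)
      obtain ⟨b, hbS, hab, hb2⟩ := hgap _ (hmemS ⟨j, by omega⟩) hamax
      obtain ⟨i, rfl⟩ := hrange b hbS
      have hij : (⟨j, by omega⟩ : Fin l) < i := hestrict.lt_iff_lt.mp hab
      have hle : e ⟨j+1, h⟩ ≤ e i := by
        apply hestrict.monotone
        rw [Fin.le_def]
        rw [Fin.lt_def] at hij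
        simpa using hij
      rw [hsval (j+1) h, hsval j (by omega)]
      omega
    · rcases lt_or_ge j l with h2 | h2
      · have hj : (⟨j, h2⟩ : Fin l) = ⟨l - 1, by omega⟩ := by
          apply Fin.ext; simp; omega
        rw [hsval j h2, hsbig (j+1) (by omega), hj]
        omega
      · rw [hsbig j h2, hsbig (j+1) (by omega)]
        omega
  have hsm : StrictMono s := strictMono_nat_of_lt_succ hmono
  set G := DeltaAux.Gr s l with hGdef
  set f : Fin (2 * l) → ℕ := fun v => s (v.val / 2) with hfdef
  have hconn : G.Connected := DeltaAux.gr_connected hl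
  have htree : G.IsTree := ⟨hconn, DeltaAux.gr_acyclic⟩
  have hfv : ∀ v : Fin (2 * l), f v = s (v.val / 2) := fun v => rfl
  have hdistp : ∀ (j : ℕ) (hj : j < l) (hu : 2*j < 2*l) (hv : 2*j+1 < 2*l),
      G.dist ⟨2*j, hu⟩ ⟨2*j+1, hv⟩ = s j := fun j hj hu hv =>
    DeltaAux.dist_pair h0 hmono hgap2 j hj hu hv
  have hlab : IsProperSetLabeling G S f := by
    refine ⟨?_, ?_, ?_, ?_⟩
    · intro v
      have hv2 : v.val / 2 < l := by have := v.isLt; omega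
      rw [hfv, hsval _ hv2]
      exact hmemS _
    · intro j hj
      obtain ⟨i, rfl⟩ := hrange j hj
      refine ⟨⟨2 * i.val, by omega⟩, ?_⟩
      rw [hfv]
      simp only [Nat.mul_div_cancel_left _ (by norm_num : 0 < 2)]
      rw [hsval _ i.isLt]
    · intro u v huv hf
      have hu2 : u.val / 2 < l := by have := u.isLt; omega
      have hv2 : v.val / 2 < l := by have := v.isLt; omega
      have heq : u.val / 2 = v.val / 2 := by
        apply hsm.injective
        rw [← hfv, ← hfv, hf]
      have hvalne : u.val ≠ v.val := fun h => huv (Fin.ext h)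
      obtain ⟨j, hjd⟩ : ∃ j, j = u.val / 2 := ⟨_, rfl⟩
      have hjl : j < l := by omega
      have hfu : f u = s j := by rw [hfv, ← hjd]
      rw [hfu]
      rcases (by omega : u.val = 2 * j ∧ v.val = 2 * j + 1
          ∨ u.val = 2 * j + 1 ∧ v.val = 2 * j) with ⟨h1, h2⟩ | ⟨h1, h2⟩
      · exact DeltaAux.dist_pair' h0 hmono hgap2 j hjl u v h1 h2
      · rw [SimpleGraph.dist_comm]
        exact DeltaAux.dist_pair' h0 hmono hgap2 j hjl v u h2 h1
    · intro j hj hj0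
      obtain ⟨i, rfl⟩ := hrange j hj
      refine ⟨⟨2 * i.val, by omega⟩, ⟨2 * i.val + 1, by omega⟩, ?_, ?_, ?_⟩
      · intro h
        simp only [Fin.mk.injEq] at h
        omega
      · rw [hfv]
        simp only [Nat.mul_div_cancel_left _ (by norm_num : 0 < 2)]
        rw [hsval _ i.isLt]
      · rw [hfv]
        have : (2 * i.val + 1) / 2 = i.val := by omega
        rw [this, hsval _ i.isLt]
  refine ⟨⟨Fin (2 * l), inferInstance, G, hconn, f, hlab⟩, G, htree, f, hlab, ?_⟩
  intro j hj hj0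
  obtain ⟨i, rfl⟩ := hrange j hj
  have hset : Finset.univ.filter (fun v : Fin (2 * l) => f v = e i)
      = {⟨2 * i.val, by omega⟩, ⟨2 * i.val + 1, by omega⟩} := by
    ext v
    simp only [Finset.mem_filter, Finset.mem_univ, true_and, Finset.mem_insert,
      Finset.mem_singleton]
    constructor
    · intro h
      have hv2 : v.val / 2 < l := by have := v.isLt; omega
      have : v.val / 2 = i.val := by
        apply hsm.injective
        rw [← hfv, h, hsval _ i.isLt]
      rcases (by omega : v.val = 2 * i.val ∨ v.val = 2 * i.val + 1) with h' | h'
      · exact Or.inl (Fin.ext h')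
      · exact Or.inr (Fin.ext h')
    · rintro (rfl | rfl)
      · rw [hfv]
        simp only [Nat.mul_div_cancel_left _ (by norm_num : 0 < 2)]
        rw [hsval _ i.isLt]
      · rw [hfv]
        have : (2 * i.val + 1) / 2 = i.val := by omega
        rw [this, hsval _ i.isLt]
  rw [hset, Finset.card_insert_of_notMem (by
    simp only [Finset.mem_singleton]
    intro h
    simp only [Fin.mk.injEq] at h
    omega), Finset.card_singleton]
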